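/- A monochromatic forest-skein category is left-cancellative if and only if it is free; equivalently, the quotient morphism from the free monochromatic forest-skein category onto a monochromatic forest-skein category has trivial kernel whenever the quotient is left-cancellative. -/

import Mathlib

namespace ForestSkein

/-- A coloured finite rooted planar binary tree with colours in `S`. -/
inductive CTree (S : Type) : Type
  | leaf : CTree S
  | node : S → CTree S → CTree S → CTree S

namespace CTree

/-- Number of leaves of a coloured binary tree. -/
def leaves {S : Type} : CTree S → ℕ
  | .leaf => 1
  | .node _ l r => leaves l + leaves r

/-- Graft a list of trees onto the leaves of a tree (vertical stacking). -/
def graft {S : Type} : CTree S → List (CTree S) → CTree S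
  | .leaf, gs => gs.headD .leaf
  | .node c l r, gs => .node c (graft l (gs.take (leaves l))) (graft r (gs.drop (leaves l)))

/-- Relabel the colours of a tree along a map of colour sets. -/
def recolour {S S' : Type} (c : S → S') : CTree S → CTree S'
  | .leaf => .leaf
  | .node x l r => .node (c x) (recolour c l) (recolour c r)

end CTree

/-- A coloured forest: a finite list of coloured binary trees.  Its roots are the
entries of the list, its leaves are the leaves of its trees. -/
abbrev Forest (S : Type) := List (CTree S)

/-- Total number of leaves of a forest. -/
def Forest.leaves {S : Type} (f : Forest S) : ℕ := (f.map CTree.leaves).sum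

/-- Composition of forests: `Forest.comp f g` stacks `g` on top of `f`, attaching
the `j`-th root of `g` to the `j`-th leaf of `f` (meaningful when
`Forest.leaves f = g.length`). -/
def Forest.comp {S : Type} : Forest S → Forest S → Forest S
  | [], _ => []
  | t :: ts, g =>
      CTree.graft t (g.take (CTree.leaves t)) :: Forest.comp ts (g.drop (CTree.leaves t))

/-- The elementary forest `a_{j,n}` (1-indexed) with `n` roots, a single `a`-coloured
caret at the `j`-th root, and all other trees trivial. -/
def elemForest {S : Type} (a : S) (j n : ℕ) : Forest S :=
  List.replicate (j - 1) CTree.leaf ++ [CTree.node a CTree.leaf CTree.leaf] ++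
    List.replicate (n - j) CTree.leaf

/-- A set of skein relations consists of pairs of trees with equal numbers of leaves. -/
def LeafPres {S : Type} (R : CTree S → CTree S → Prop) : Prop :=
  ∀ t t' : CTree S, R t t' → CTree.leaves t = CTree.leaves t'

/-- The equivalence relation on coloured forests generated by a set `R` of skein
relations (pairs of trees), closed under composition and tensor product
(horizontal juxtaposition).  The quotient is the forest-skein category
presented by `R`. -/
inductive SkeinEquiv {S : Type} (R : CTree S → CTree S → Prop) : Forest S → Forest S → Prop
  | of {t t' : CTree S} : R t t' → SkeinEquiv R [t] [t']
  | refl (f : Forest S) : SkeinEquiv R f f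
  | symm {f g : Forest S} : SkeinEquiv R f g → SkeinEquiv R g f
  | trans {f g h : Forest S} : SkeinEquiv R f g → SkeinEquiv R g h → SkeinEquiv R f h
  | comp {f f' g g' : Forest S} :
      SkeinEquiv R f f' → SkeinEquiv R g g' → SkeinEquiv R (Forest.comp f g) (Forest.comp f' g')
  | tensor {f f' g g' : Forest S} :
      SkeinEquiv R f f' → SkeinEquiv R g g' → SkeinEquiv R (f ++ g) (f' ++ g')

/-- Left-cancellativity of a forest-skein category given by the equivalence `E` on
forests: `f ∘ g = f ∘ h` implies `g = h`. -/
def LeftCancel {S : Type} (E : Forest S → Forest S → Prop) : Prop :=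
  ∀ f g h : Forest S, Forest.leaves f = g.length → Forest.leaves f = h.length →
    E (Forest.comp f g) (Forest.comp f h) → E g h

/-- Ore's property for the forest-skein category given by the equivalence `E`:
any two forests with the same number of roots admit a common right multiple. -/
def OreProp {S : Type} (E : Forest S → Forest S → Prop) : Prop :=
  ∀ f g : Forest S, f.length = g.length →
    ∃ p q : Forest S, Forest.leaves f = p.length ∧ Forest.leaves g = q.length ∧
      E (Forest.comp f p) (Forest.comp g q)

/-- Equality of the fractions `t ∘ s⁻¹` and `t' ∘ s'⁻¹` in the fraction group:
there are forests `f, f'` with `t ∘ f = t' ∘ f'` and `s ∘ f = s' ∘ f'` modulo `E`. -/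
def FracRel {S : Type} (E : Forest S → Forest S → Prop) (t s t' s' : CTree S) : Prop :=
  ∃ f f' : Forest S, CTree.leaves t = f.length ∧ CTree.leaves t' = f'.length ∧
    E [CTree.graft t f] [CTree.graft t' f'] ∧ E [CTree.graft s f] [CTree.graft s' f']

/-- Number of carets of a tree. -/
def CTree.carets {S : Type} : CTree S → ℕ
  | .leaf => 0
  | .node _ l r => carets l + carets r + 1

/-- Number of carets of a forest. -/
def Forest.carets {S : Type} (f : Forest S) : ℕ := (f.map CTree.carets).sum

lemma CTree.one_le_leaves {S : Type} (t : CTree S) : 1 ≤ t.leaves := by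
  induction t with
  | leaf => simp [CTree.leaves]
  | node a l r ihl ihr => simp [CTree.leaves]; omega

lemma leaves_graft {S : Type} (t : CTree S) (gs : List (CTree S)) :
    CTree.leaves (CTree.graft t gs) =
      ((gs.take t.leaves).map CTree.leaves).sum + (t.leaves - gs.length) := by
  induction t generalizing gs with
  | leaf => cases gs <;> simp [CTree.graft, CTree.leaves]
  | node a l r ihl ihr =>
    simp only [CTree.graft, CTree.leaves, ihl, ihr]
    rw [List.take_take, min_self, List.take_add, List.map_append, List.sum_append]
    have h1 := List.length_take (i := l.leaves) (l := gs)
    have h2 := List.length_drop (i := l.leaves) (l := gs)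
    omega

lemma map_leaves_comp {S : Type} : ∀ (f f' g g' : Forest S),
    f.map CTree.leaves = f'.map CTree.leaves →
    g.map CTree.leaves = g'.map CTree.leaves →
    (Forest.comp f g).map CTree.leaves = (Forest.comp f' g').map CTree.leaves := by
  intro f
  induction f with
  | nil =>
    intro f' g g' hf _
    have : f' = [] := by
      cases f' with
      | nil => rfl
      | cons a as => simp at hf
    subst this; rfl
  | cons t ts ih =>
    intro f' g g' hf hg
    cases f' with
    | nil => simp at hf
    | cons t' ts' =>
      simp only [List.map_cons, List.cons.injEq] at hf
      obtain ⟨ht, hts⟩ := hf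
      have hlen : g.length = g'.length := by
        have := congrArg List.length hg
        simpa using this
      simp only [Forest.comp, List.map_cons, List.cons.injEq]
      constructor
      · simp only [leaves_graft, ht, List.take_take, min_self, List.map_take, hg,
          List.length_take, hlen]
      · exact ih ts' (g.drop t.leaves) (g'.drop t'.leaves) hts
          (by rw [List.map_drop, List.map_drop, hg, ht])

lemma profile_eq {S : Type} {R : CTree S → CTree S → Prop} (hR : LeafPres R)
    {f g : Forest S} (h : SkeinEquiv R f g) :
    f.map CTree.leaves = g.map CTree.leaves := by
  induction h with
  | of h => simp [hR _ _ h]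
  | refl f => rfl
  | symm _ ih => exact ih.symm
  | trans _ _ ih1 ih2 => exact ih1.trans ih2
  | comp _ _ ih1 ih2 => exact map_leaves_comp _ _ _ _ ih1 ih2
  | tensor _ _ ih1 ih2 => simp only [List.map_append, ih1, ih2]

lemma graft_injective {S : Type} : ∀ (t : CTree S) (gs hs : List (CTree S)),
    gs.length = t.leaves → hs.length = t.leaves → t.graft gs = t.graft hs → gs = hs := by
  intro t
  induction t with
  | leaf =>
    intro gs hs hg hh heq
    simp only [CTree.leaves] at hg hh
    match gs, hs, hg, hh with
    | [x], [y], _, _ =>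
      simpa [CTree.graft] using heq
  | node a l r ihl ihr =>
    intro gs hs hg hh heq
    simp only [CTree.graft, CTree.node.injEq] at heq
    simp only [CTree.leaves] at hg hh
    have h1 : gs.take l.leaves = hs.take l.leaves := by
      apply ihl _ _ ?_ ?_ heq.2.1 <;> (simp [List.length_take]; omega)
    have h2 : gs.drop l.leaves = hs.drop l.leaves := by
      apply ihr _ _ ?_ ?_ heq.2.2 <;> (simp [List.length_drop]; omega)
    rw [← List.take_append_drop l.leaves gs, ← List.take_append_drop l.leaves hs, h1, h2]

lemma leaves_cons {S : Type} (t : CTree S) (ts : Forest S) :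
    Forest.leaves (t :: ts) = t.leaves + Forest.leaves ts := by
  simp [Forest.leaves]

lemma comp_injective {S : Type} : ∀ (f g h : Forest S),
    Forest.leaves f = g.length → Forest.leaves f = h.length →
    Forest.comp f g = Forest.comp f h → g = h := by
  intro f
  induction f with
  | nil =>
    intro g h hg hh _
    simp [Forest.leaves] at hg hh
    rw [List.eq_nil_of_length_eq_zero hg.symm, List.eq_nil_of_length_eq_zero hh.symm]
  | cons t ts ih =>
    intro g h hg hh heq
    rw [leaves_cons] at hg hh
    have hts := CTree.one_le_leaves t
    simp only [Forest.comp, List.cons.injEq] at heq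
    have h1 : g.take t.leaves = h.take t.leaves := by
      apply graft_injective t _ _ ?_ ?_ heq.1 <;> (simp [List.length_take]; omega)
    have h2 : g.drop t.leaves = h.drop t.leaves := by
      apply ih _ _ ?_ ?_ heq.2 <;> (simp only [List.length_drop]; omega)
    rw [← List.take_append_drop t.leaves g, ← List.take_append_drop t.leaves h, h1, h2]

lemma comp_replicate_leaf {S : Type} : ∀ (g : Forest S),
    Forest.comp (List.replicate g.length CTree.leaf) g = g := by
  intro g
  induction g with
  | nil => rfl
  | cons x xs ih =>
    simp only [List.length_cons, List.replicate_succ, Forest.comp, CTree.leaves,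
      List.take_succ_cons, List.take_zero, List.drop_succ_cons, List.drop_zero, ih,
      CTree.graft, List.headD]

lemma leaf_of_leaves_eq_one {S : Type} {t : CTree S} (h : t.leaves = 1) : t = CTree.leaf := by
  cases t with
  | leaf => rfl
  | node a l r =>
    have h1 := CTree.one_le_leaves l
    have h2 := CTree.one_le_leaves r
    simp [CTree.leaves] at h
    omega

lemma split (f : Forest Unit) : ∀ (g : Forest Unit),
    f.map CTree.leaves = g.map CTree.leaves →
    f = g ∨ ∃ e f' g', Forest.leaves e = f'.length ∧ Forest.leaves e = g'.length ∧
      f = Forest.comp e f' ∧ g = Forest.comp e g' ∧ f'.carets < f.carets := by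
  induction f with
  | nil =>
    intro g hg
    left
    cases g with
    | nil => rfl
    | cons s ss => simp at hg
  | cons t ts ih =>
    intro g hg
    cases g with
    | nil => simp at hg
    | cons s ss =>
      simp only [List.map_cons, List.cons.injEq] at hg
      obtain ⟨hts, hss⟩ := hg
      cases t with
      | leaf =>
        have hs : s = CTree.leaf := by
          apply leaf_of_leaves_eq_one
          simpa [CTree.leaves] using hts.symm
        subst hs
        rcases ih ss hss with rfl | ⟨e, f', g', h1, h2, h3, h4, h5⟩
        · exact Or.inl rfl
        · right
          refine ⟨CTree.leaf :: e, CTree.leaf :: f', CTree.leaf :: g', ?_, ?_, ?_, ?_, ?_⟩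
          · simp only [leaves_cons, CTree.leaves, List.length_cons, h1]; omega
          · simp only [leaves_cons, CTree.leaves, List.length_cons, h2]; omega
          · simp [Forest.comp, CTree.leaves, CTree.graft, ← h3]
          · simp [Forest.comp, CTree.leaves, CTree.graft, ← h4]
          · simpa [Forest.carets, CTree.carets] using h5
      | node a l r =>
        have h2le : 2 ≤ s.leaves := by
          rw [← hts]
          have h1 := CTree.one_le_leaves l
          have h2 := CTree.one_le_leaves r
          simp [CTree.leaves]; omega
        cases s with
        | leaf => simp [CTree.leaves] at h2le
        | node b l' r' =>
          right
          have hlen : ss.length = ts.length := by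
            have := congrArg List.length hss
            simpa using this.symm
          cases a; cases b
          refine ⟨CTree.node () CTree.leaf CTree.leaf :: List.replicate ts.length CTree.leaf,
            l :: r :: ts, l' :: r' :: ss, ?_, ?_, ?_, ?_, ?_⟩
          · rw [leaves_cons]
            simp only [Forest.leaves, CTree.leaves, List.map_replicate, List.sum_replicate,
              List.length_cons, smul_eq_mul, mul_one]
            omega
          · rw [leaves_cons]
            simp only [Forest.leaves, CTree.leaves, List.map_replicate, List.sum_replicate,
              List.length_cons, smul_eq_mul, mul_one, hlen]
            omega
          · simp only [Forest.comp, CTree.leaves, CTree.graft]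
            simp only [List.take_succ_cons, List.take_zero, List.drop_succ_cons,
              List.drop_zero, List.headD]
            have := comp_replicate_leaf ts
            simp [CTree.graft, this, List.take_succ_cons, List.headD]
          · simp only [Forest.comp, CTree.leaves, CTree.graft]
            simp only [List.take_succ_cons, List.take_zero, List.drop_succ_cons,
              List.drop_zero, List.headD]
            rw [← hlen]
            have := comp_replicate_leaf ss
            simp [CTree.graft, this, List.take_succ_cons, List.headD]
          · simp only [Forest.carets, CTree.carets, List.map_cons, List.sum_cons]
            omega

/-- A monochromatic forest-skein category is left-cancellative if and
only if it is free, i.e. iff the quotient morphism from the free monochromatic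
forest-skein category has trivial kernel. -/
theorem monochromatic_leftCancel_iff_free
    (R : CTree Unit → CTree Unit → Prop) (hR : LeafPres R) :
    LeftCancel (SkeinEquiv R) ↔ ∀ f g : Forest Unit, SkeinEquiv R f g → f = g := by
  constructor
  · intro hlc
    have main : ∀ n f g, Forest.carets f ≤ n → SkeinEquiv R f g → f = g := by
      intro n
      induction n with
      | zero =>
        intro f g hn h
        rcases split f g (profile_eq hR h) with rfl | ⟨e, f', g', h1, h2, rfl, rfl, h5⟩
        · rfl
        · omega
      | succ n ihn =>
        intro f g hn h
        rcases split f g (profile_eq hR h) with rfl | ⟨e, f', g', h1, h2, rfl, rfl, h5⟩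
        · rfl
        · have hE : SkeinEquiv R f' g' := hlc e f' g' h1 h2 h
          rw [ihn f' g' (by omega) hE]
    intro f g h
    exact main (Forest.carets f) f g le_rfl h
  · intro hfree f g h hg hh hE
    have := comp_injective f g h hg hh (hfree _ _ hE)
    exact this ▸ SkeinEquiv.refl g

end ForestSkein
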